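/- For every Markov process with rates (q_{ij}) satisfying the balance condition with positive equilibrium P*, and for every distribution P ≠ P*, there exists a Markov process (q'_{ij}) satisfying detailed balance with the same equilibrium P* such that, for every convex differentiable function h, the time derivative of H_h(P‖P*) = ∑_i p*_i h(p_i/p*_i) at P under the first process equals the time derivative of H_h(P‖P*) at P under the second. -/

import Mathlib

open Finset

private lemma sum_sum_antisymm {n : ℕ} (s : Finset (Fin n)) (F : Fin n → Fin n → ℝ)
    (hF : ∀ i j, F j i = - F i j) : ∑ i ∈ s, ∑ j ∈ s, F i j = 0 := by
  have h1 : ∑ i ∈ s, ∑ j ∈ s, F i j = ∑ j ∈ s, ∑ i ∈ s, F i j := Finset.sum_comm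
  have h2 : ∑ j ∈ s, ∑ i ∈ s, F i j = - ∑ i ∈ s, ∑ j ∈ s, F i j := by
    rw [← Finset.sum_neg_distrib]
    exact Finset.sum_congr rfl fun i _ => by
      rw [← Finset.sum_neg_distrib]
      exact Finset.sum_congr rfl fun j _ => hF i j
  linarith

private lemma sum_filter_ne_eq {n : ℕ} (f : Fin n → ℝ) (i : Fin n) (hf : f i = 0) :
    ∑ j ∈ Finset.univ.filter (· ≠ i), f j = ∑ j, f j := by
  rw [show Finset.univ.filter (· ≠ i) = Finset.univ.erase i from Finset.filter_ne' _ _]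
  exact Finset.sum_erase _ hf

private lemma cut_nonneg {n : ℕ} (q : Fin n → Fin n → ℝ) (pstar p : Fin n → ℝ)
    (hpstar : ∀ i, 0 < pstar i) (hq : ∀ i j, i ≠ j → 0 ≤ q i j)
    (hbal : ∀ i, ∑ j ∈ Finset.univ.filter (· ≠ i), q i j * pstar j =
      (∑ j ∈ Finset.univ.filter (· ≠ i), q j i) * pstar i)
    (t : ℝ) :
    0 ≤ ∑ i ∈ Finset.univ.filter (fun i => p i / pstar i ≤ t),
        ∑ j ∈ Finset.univ.filter (· ≠ i), (q i j * p j - q j i * p i) := by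
  classical
  set F : Fin n → Fin n → ℝ := fun i j => q i j * p j - q j i * p i with hF
  set Fs : Fin n → Fin n → ℝ := fun i j => q i j * pstar j - q j i * pstar i with hFs
  set A : Finset (Fin n) := Finset.univ.filter (fun i => p i / pstar i ≤ t) with hA
  set B : Finset (Fin n) := Finset.univ.filter (fun i => ¬ (p i / pstar i ≤ t)) with hB
  have hFanti : ∀ i j, F j i = - F i j := fun i j => by simp only [hF]; ring
  have hFsanti : ∀ i j, Fs j i = - Fs i j := fun i j => by simp only [hFs]; ring
  have hscut : ∀ (G : Fin n → Fin n → ℝ), (∀ i j, G j i = - G i j) →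
      (∀ i, ∑ j, G i j = 0) → ∑ i ∈ A, ∑ j ∈ B, G i j = 0 := by
    intro G hGa hG0
    have h1 : ∀ i, ∑ j ∈ A, G i j + ∑ j ∈ B, G i j = 0 := by
      intro i
      rw [Finset.sum_filter_add_sum_filter_not Finset.univ _ (fun j => G i j)]
      exact hG0 i
    have h2 : ∑ i ∈ A, (∑ j ∈ A, G i j + ∑ j ∈ B, G i j) = 0 :=
      Finset.sum_eq_zero fun i _ => h1 i
    rw [Finset.sum_add_distrib, sum_sum_antisymm A G hGa] at h2
    linarith
  have hinner : ∀ i, ∑ j ∈ Finset.univ.filter (· ≠ i), F i j = ∑ j, F i j := by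
    intro i; exact sum_filter_ne_eq _ i (by simp [hF])
  have hbal' : ∀ i, ∑ j, Fs i j = 0 := by
    intro i
    have h := hbal i
    have : ∑ j ∈ Finset.univ.filter (· ≠ i), Fs i j = 0 := by
      simp only [hFs, Finset.sum_sub_distrib, ← Finset.sum_mul]
      rw [h]; ring
    rw [← sum_filter_ne_eq (fun j => Fs i j) i (by simp [hFs])]
    exact this
  have hsplit : ∑ i ∈ A, ∑ j ∈ Finset.univ.filter (· ≠ i), F i j
      = ∑ i ∈ A, ∑ j ∈ B, F i j := by
    have h1 : ∀ i, ∑ j ∈ Finset.univ.filter (· ≠ i), F i j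
        = ∑ j ∈ A, F i j + ∑ j ∈ B, F i j := by
      intro i
      rw [hinner i, ← Finset.sum_filter_add_sum_filter_not Finset.univ
        (fun j => p j / pstar j ≤ t) (fun j => F i j)]
    rw [Finset.sum_congr rfl fun i _ => h1 i, Finset.sum_add_distrib,
      sum_sum_antisymm A F hFanti, zero_add]
  have hcutFs : ∑ i ∈ A, ∑ j ∈ B, Fs i j = 0 := hscut Fs hFsanti hbal'
  rw [hsplit]
  have key : 0 ≤ ∑ i ∈ A, ∑ j ∈ B, (F i j - t * Fs i j) := by
    apply Finset.sum_nonneg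
    intro i hi
    apply Finset.sum_nonneg
    intro j hj
    have hiA : p i / pstar i ≤ t := (Finset.mem_filter.mp hi).2
    have hjB : ¬ (p j / pstar j ≤ t) := (Finset.mem_filter.mp hj).2
    have hij : i ≠ j := fun h => hjB (h ▸ hiA)
    have hpi : p i ≤ t * pstar i := by
      have := (div_le_iff₀ (hpstar i)).mp hiA; linarith
    have hpj : t * pstar j ≤ p j := by
      have h := lt_of_not_ge hjB
      have := (lt_div_iff₀ (hpstar j)).mp h; linarith
    have h1 : 0 ≤ q i j * (p j - t * pstar j) :=
      mul_nonneg (hq i j hij) (by linarith)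
    have h2 : 0 ≤ q j i * (t * pstar i - p i) :=
      mul_nonneg (hq j i hij.symm) (by linarith)
    simp only [hF, hFs]
    nlinarith [h1, h2]
  have heq : ∑ i ∈ A, ∑ j ∈ B, (F i j - t * Fs i j)
      = ∑ i ∈ A, ∑ j ∈ B, F i j - t * ∑ i ∈ A, ∑ j ∈ B, Fs i j := by
    rw [Finset.mul_sum, ← Finset.sum_sub_distrib]
    exact Finset.sum_congr rfl fun i _ => by
      rw [Finset.mul_sum, ← Finset.sum_sub_distrib]
  rw [heq, hcutFs, mul_zero, sub_zero] at key
  exact key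

theorem csiszar_morimoto_derivative_matching (n : ℕ) (q : Fin n → Fin n → ℝ)
    (pstar p : Fin n → ℝ) (hpstar : ∀ i, 0 < pstar i)
    (hpstarsum : ∑ i, pstar i = 1)
    (hp : ∀ i, 0 ≤ p i) (hpsum : ∑ i, p i = 1) (hne : p ≠ pstar)
    (hq : ∀ i j, i ≠ j → 0 ≤ q i j)
    (hbal : ∀ i, ∑ j ∈ Finset.univ.filter (· ≠ i), q i j * pstar j =
      (∑ j ∈ Finset.univ.filter (· ≠ i), q j i) * pstar i) :
    ∃ q' : Fin n → Fin n → ℝ,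
      (∀ i j, i ≠ j → 0 ≤ q' i j) ∧
      (∀ i j, i ≠ j → q' i j * pstar j = q' j i * pstar i) ∧
      ∀ h h' : ℝ → ℝ, ConvexOn ℝ (Set.Ioi 0) h →
        (∀ x : ℝ, 0 < x → HasDerivAt h (h' x) x) →
        ∑ i, h' (p i / pstar i) *
          (∑ j ∈ Finset.univ.filter (· ≠ i), (q i j * p j - q j i * p i)) =
        ∑ i, h' (p i / pstar i) *
          (∑ j ∈ Finset.univ.filter (· ≠ i), (q' i j * p j - q' j i * p i)) := by
  classical
  rcases Nat.eq_zero_or_pos n with hn0 | hn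
  · exfalso; subst hn0; simpa using hpsum
  set x : Fin n → ℝ := fun i => p i / pstar i with hxdef
  set v : Fin n → ℝ :=
    fun i => ∑ j ∈ Finset.univ.filter (· ≠ i), (q i j * p j - q j i * p i) with hvdef
  have hpx : ∀ i, p i = x i * pstar i := fun i =>
    (div_mul_cancel₀ (p i) (hpstar i).ne').symm
  have hvfull : ∀ i, v i = ∑ j, (q i j * p j - q j i * p i) := fun i =>
    sum_filter_ne_eq _ i (by ring)
  have hvsum : ∑ i, v i = 0 := by
    rw [Finset.sum_congr rfl fun i _ => hvfull i]
    exact sum_sum_antisymm Finset.univ _ (fun i j => by ring)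
  -- the sorted distinct values of x
  set S : Finset ℝ := Finset.image x Finset.univ with hSdef
  set m : ℕ := S.card with hmdef
  have hmpos : 0 < m := Finset.card_pos.mpr ⟨x ⟨0, hn⟩, Finset.mem_image_of_mem x (Finset.mem_univ _)⟩
  set e : Fin m ≃o {r // r ∈ S} := S.orderIsoOfFin rfl with hedef
  set a : ℕ → ℝ := fun k => if h : k < m then (e ⟨k, h⟩ : ℝ) else 0 with hadef
  have ha_eq : ∀ k (h : k < m), a k = (e ⟨k, h⟩ : ℝ) := fun k h => by
    simp only [hadef, dif_pos h]
  have hmono : ∀ k l, l < m → k < l → a k < a l := by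
    intro k l hl hkl
    rw [ha_eq k (hkl.trans hl), ha_eq l hl]
    exact Subtype.coe_lt_coe.mpr (e.strictMono (by exact hkl))
  have hmono_le : ∀ k l, l < m → k ≤ l → a k ≤ a l := by
    intro k l hl hkl
    rcases eq_or_lt_of_le hkl with h | h
    · rw [h]
    · exact (hmono k l hl h).le
  have ha_mem : ∀ k, k < m → a k ∈ S := fun k h => by
    rw [ha_eq k h]; exact (e ⟨k, h⟩).2
  have hsurj : ∀ i, ∃ k, k < m ∧ a k = x i := by
    intro i
    have hxi : x i ∈ S := Finset.mem_image_of_mem x (Finset.mem_univ _)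
    refine ⟨(e.symm ⟨x i, hxi⟩).1, (e.symm ⟨x i, hxi⟩).2, ?_⟩
    rw [ha_eq _ (e.symm ⟨x i, hxi⟩).2]
    simp
  have hainj : ∀ k l, k < m → l < m → a k = a l → k = l := by
    intro k l hk hl hkl
    by_contra hne'
    rcases Nat.lt_or_ge k l with h | h
    · exact absurd hkl (ne_of_lt (hmono k l hl h))
    · rcases Nat.lt_or_ge l k with h2 | h2
      · exact absurd hkl.symm (ne_of_lt (hmono l k hk h2))
      · omega
  have hrepex : ∀ k, k < m → ∃ i, x i = a k := by
    intro k hk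
    obtain ⟨i, _, hi⟩ := Finset.mem_image.mp (ha_mem k hk)
    exact ⟨i, hi⟩
  set rep : ℕ → Fin n := fun k => if h : k < m then (hrepex k h).choose else ⟨0, hn⟩
    with hrepdef
  have hrep : ∀ k, k < m → x (rep k) = a k := by
    intro k hk
    simp only [hrepdef, dif_pos hk]
    exact (hrepex k hk).choose_spec
  set G : ℕ → ℝ := fun k => ∑ i ∈ Finset.univ.filter (fun i => x i = a k), v i with hGdef
  set D : ℕ → ℝ := fun k => ∑ i ∈ Finset.univ.filter (fun i => x i ≤ a k), v i with hDdef
  have hD0 : ∀ k, 0 ≤ D k := fun k =>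
    cut_nonneg q pstar p hpstar hq hbal (a k)
  have hDG : ∀ k, k < m → D k = ∑ l ∈ Finset.range (k+1), G l := by
    intro k hk
    have h1 : ∀ l, l ∈ Finset.range (k+1) →
        G l = ∑ i ∈ Finset.univ, if x i = a l then v i else 0 := by
      intro l _
      simp only [hGdef, Finset.sum_filter]
    rw [Finset.sum_congr rfl h1, Finset.sum_comm]
    simp only [hDdef, Finset.sum_filter]
    refine Finset.sum_congr rfl fun i _ => ?_
    by_cases hle : x i ≤ a k
    · rw [if_pos hle]
      obtain ⟨k0, hk0, hk0eq⟩ := hsurj i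
      have hk0k : k0 ≤ k := by
        by_contra hcon
        have : a k < a k0 := hmono k k0 hk0 (Nat.lt_of_not_le hcon)
        rw [hk0eq] at this
        linarith
      rw [Finset.sum_eq_single_of_mem k0 (Finset.mem_range.mpr (Nat.lt_succ_of_le hk0k))
        (fun l hl hlne => ?_)]
      · rw [if_pos hk0eq.symm]
      · rw [if_neg]
        intro hcon
        have hlm : l < m := lt_of_le_of_lt (Nat.le_of_lt_succ (Finset.mem_range.mp hl)) hk
        exact hlne (hainj l k0 hlm hk0 (by rw [← hcon, hk0eq]))
    · rw [if_neg hle]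
      refine (Finset.sum_eq_zero fun l hl => ?_).symm
      rw [if_neg]
      intro hcon
      have hlm : l < m := lt_of_le_of_lt (Nat.le_of_lt_succ (Finset.mem_range.mp hl)) hk
      exact hle (by rw [hcon]; exact hmono_le l k (by omega) (Nat.le_of_lt_succ (Finset.mem_range.mp hl)))
  have hDtop : D (m - 1) = 0 := by
    have huniv : Finset.univ.filter (fun i => x i ≤ a (m-1)) = Finset.univ := by
      refine Finset.filter_true_of_mem fun i _ => ?_
      obtain ⟨k0, hk0, hk0eq⟩ := hsurj i
      rw [← hk0eq]
      exact hmono_le k0 (m-1) (by omega) (by omega)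
    simp only [hDdef, huniv, hvsum]
  -- the chain weights
  set c : ℕ → ℝ := fun k => D k / (a (k+1) - a k) with hcdef
  have hgap : ∀ k, k + 1 < m → 0 < a (k+1) - a k := fun k hk =>
    sub_pos.mpr (hmono k (k+1) hk (Nat.lt_succ_self k))
  have hcnn : ∀ k, k + 1 < m → 0 ≤ c k := fun k hk =>
    div_nonneg (hD0 k) (hgap k hk).le
  have hcD : ∀ k, k + 1 < m → c k * (a (k+1) - a k) = D k := fun k hk =>
    div_mul_cancel₀ (D k) (hgap k hk).ne'
  set w : Fin n → Fin n → ℝ := fun i j => ∑ k ∈ Finset.range (m-1),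
    ((if i = rep k ∧ j = rep (k+1) then c k else 0)
      + (if i = rep (k+1) ∧ j = rep k then c k else 0)) with hwdef
  have hrange : ∀ k, k ∈ Finset.range (m-1) → k + 1 < m := by
    intro k hk; have := Finset.mem_range.mp hk; omega
  have hwsymm : ∀ i j, w i j = w j i := by
    intro i j
    simp only [hwdef]
    refine Finset.sum_congr rfl fun k _ => ?_
    rw [add_comm]
    exact congrArg₂ (· + ·) (if_congr (by tauto) rfl rfl) (if_congr (by tauto) rfl rfl)
  have hwnn : ∀ i j, 0 ≤ w i j := by
    intro i j
    refine Finset.sum_nonneg fun k hk => add_nonneg ?_ ?_ <;> split <;>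
      first
      | exact hcnn k (hrange k hk)
      | exact le_rfl
  refine ⟨fun i j => w i j / pstar j, fun i j _ => div_nonneg (hwnn i j) (hpstar j).le,
    fun i j _ => ?_, fun h h' _ _ => ?_⟩
  · rw [div_mul_cancel₀ _ (hpstar j).ne', div_mul_cancel₀ _ (hpstar i).ne', hwsymm]
  · -- the main computation
    have hR1 : ∀ i, ∑ j ∈ Finset.univ.filter (· ≠ i),
        (w i j / pstar j * p j - w j i / pstar i * p i) = ∑ j, w i j * (x j - x i) := by
      intro i
      rw [sum_filter_ne_eq _ i (by ring)]
      refine Finset.sum_congr rfl fun j _ => ?_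
      rw [hwsymm j i, hpx i, hpx j]
      have h1 := (hpstar i).ne'
      have h2 := (hpstar j).ne'
      field_simp
    have hL : ∑ k ∈ Finset.range m, h' (a k) * G k = ∑ i, h' (x i) * v i := by
      have step1 : ∀ k ∈ Finset.range m, h' (a k) * G k
          = ∑ i, if x i = a k then h' (x i) * v i else 0 := by
        intro k _
        simp only [hGdef]
        rw [Finset.mul_sum, Finset.sum_filter]
        refine Finset.sum_congr rfl fun i _ => ?_
        split_ifs with hxi
        · rw [hxi]
        · rfl
      rw [Finset.sum_congr rfl step1, Finset.sum_comm]
      refine Finset.sum_congr rfl fun i _ => ?_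
      obtain ⟨k0, hk0, hk0eq⟩ := hsurj i
      rw [Finset.sum_eq_single_of_mem k0 (Finset.mem_range.mpr hk0) ?_, if_pos hk0eq.symm]
      intro l hl hlne
      rw [if_neg]
      intro hcon
      exact hlne (hainj l k0 (Finset.mem_range.mp hl) hk0 (by rw [← hcon, hk0eq]))
    have hGtot : ∑ k ∈ Finset.range m, G k = 0 := by
      have hh := hDG (m-1) (by omega)
      rw [show m - 1 + 1 = m by omega] at hh
      rw [← hh]
      exact hDtop
    have hAbel : ∑ k ∈ Finset.range m, h' (a k) * G k
        = ∑ k ∈ Finset.range (m-1), D k * (h' (a k) - h' (a (k+1))) := by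
      have habel := Finset.sum_range_by_parts (fun k => h' (a k)) G m
      simp only [smul_eq_mul] at habel
      have hpart : ∀ k ∈ Finset.range (m-1),
          (h' (a (k+1)) - h' (a k)) * ∑ l ∈ Finset.range (k+1), G l
          = (h' (a (k+1)) - h' (a k)) * D k := by
        intro k hk
        rw [← hDG k (by have := Finset.mem_range.mp hk; omega)]
      rw [hGtot, mul_zero, zero_sub, Finset.sum_congr rfl hpart] at habel
      rw [habel, ← Finset.sum_neg_distrib]
      exact Finset.sum_congr rfl fun k _ => by ring
    have hev : ∀ (A B : Fin n) (f : Fin n → Fin n → ℝ),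
        ∑ i, ∑ j, (if i = A ∧ j = B then f i j else 0) = f A B := by
      intro A B f
      have h1 : ∀ i : Fin n, ∑ j, (if i = A ∧ j = B then f i j else 0)
          = if i = A then f i B else 0 := by
        intro i
        by_cases hiA : i = A
        · simp [hiA, Finset.sum_ite_eq']
        · simp [hiA]
      rw [Finset.sum_congr rfl fun i _ => h1 i]
      simp [Finset.sum_ite_eq']
    have hR2 : ∑ i, h' (x i) * ∑ j, w i j * (x j - x i)
        = ∑ k ∈ Finset.range (m-1), D k * (h' (a k) - h' (a (k+1))) := by
      have e1 : ∀ i : Fin n, h' (x i) * ∑ j, w i j * (x j - x i)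
          = ∑ k ∈ Finset.range (m-1), ∑ j,
            ((if i = rep k ∧ j = rep (k+1) then c k * (h' (x i) * (x j - x i)) else 0)
              + (if i = rep (k+1) ∧ j = rep k then c k * (h' (x i) * (x j - x i)) else 0)) := by
        intro i
        rw [Finset.mul_sum]
        have e2 : ∀ j : Fin n, h' (x i) * (w i j * (x j - x i))
            = ∑ k ∈ Finset.range (m-1),
              ((if i = rep k ∧ j = rep (k+1) then c k * (h' (x i) * (x j - x i)) else 0)
                + (if i = rep (k+1) ∧ j = rep k then c k * (h' (x i) * (x j - x i)) else 0)) := by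
          intro j
          simp only [hwdef]
          rw [Finset.sum_mul, Finset.mul_sum]
          refine Finset.sum_congr rfl fun k _ => ?_
          split_ifs <;> ring
        rw [Finset.sum_congr rfl fun j _ => e2 j, Finset.sum_comm]
      rw [Finset.sum_congr rfl fun i _ => e1 i, Finset.sum_comm]
      refine Finset.sum_congr rfl fun k hk => ?_
      have hk1 : k + 1 < m := hrange k hk
      have hk0 : k < m := by omega
      calc ∑ i, ∑ j, ((if i = rep k ∧ j = rep (k+1) then c k * (h' (x i) * (x j - x i)) else 0)
            + (if i = rep (k+1) ∧ j = rep k then c k * (h' (x i) * (x j - x i)) else 0))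
          = (∑ i, ∑ j, (if i = rep k ∧ j = rep (k+1)
                then c k * (h' (x i) * (x j - x i)) else 0))
            + (∑ i, ∑ j, (if i = rep (k+1) ∧ j = rep k
                then c k * (h' (x i) * (x j - x i)) else 0)) := by
            rw [← Finset.sum_add_distrib]
            exact Finset.sum_congr rfl fun i _ => Finset.sum_add_distrib
        _ = c k * (h' (x (rep k)) * (x (rep (k+1)) - x (rep k)))
            + c k * (h' (x (rep (k+1))) * (x (rep k) - x (rep (k+1)))) :=
            congrArg₂ (· + ·) (hev _ _ _) (hev _ _ _)
        _ = D k * (h' (a k) - h' (a (k+1))) := by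
            rw [hrep k hk0, hrep (k+1) hk1, ← hcD k hk1]
            ring
    calc ∑ i, h' (x i) * v i
        = ∑ k ∈ Finset.range m, h' (a k) * G k := hL.symm
      _ = ∑ k ∈ Finset.range (m-1), D k * (h' (a k) - h' (a (k+1))) := hAbel
      _ = ∑ i, h' (x i) * ∑ j, w i j * (x j - x i) := hR2.symm
      _ = ∑ i, h' (x i) * ∑ j ∈ Finset.univ.filter (· ≠ i),
            (w i j / pstar j * p j - w j i / pstar i * p i) :=
          Finset.sum_congr rfl fun i _ => by rw [hR1 i]
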